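/- Determinization–harvester lemma: let Σ be a finite type and A : NFA Σ Q an NFA with Q finite. Then there exists a reverse transition function δ' : (Q ⊕ Unit) → (Σ × Set Q) → (Q ⊕ Unit) such that for every word w : List Σ accepted by A there is an accepting run r of A on w with the following property: letting p = List.scanl A.stepSet A.start w (the run of the powerset determinization of A on w), u = w.zip p.dropLast, and r' = (List.scanl δ' (Sum.inr ()) u.reverse).reverse (the backward run of the harvester started in the dummy final state), one has r'.dropLast = (r.dropLast).map Sum.inl. -/

import Mathlib

/-- An accepting run of an NFA `B` on a word `w`: a list of states of length
`w.length + 1` starting in a start state, following the step relation, and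
ending in an accept state. -/
def IsAcceptingRun {A Q : Type*} (B : NFA A Q) (w : List A) (r : List Q) : Prop :=
  ∃ h : r.length = w.length + 1,
    r[0]'(by omega) ∈ B.start ∧
    (∀ i : ℕ, ∀ hi : i < w.length,
      r[i + 1]'(by omega) ∈ B.step (r[i]'(by omega)) (w[i]'hi)) ∧
    r[w.length]'(by omega) ∈ B.accept

theorem scanl_getElem' {α β : Type*} (f : β → α → β) (b : β) (l : List α)
    (i : ℕ) (h : i < (List.scanl f b l).length) :
    (List.scanl f b l)[i] = List.foldl f b (l.take i) := by
  induction l generalizing b i with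
  | nil =>
    simp only [List.length_scanl, List.length_nil] at h
    interval_cases i <;> simp
  | cons a l ih =>
    cases i with
    | zero => simp
    | succ i =>
      simp only [List.scanl_cons, List.take_cons, List.foldl_cons, List.getElem_cons_succ]
      apply ih

theorem gidx {α : Type*} (l : List α) {i j : ℕ} (h : i = j) {hi : i < l.length} :
    l[i]'hi = l[j]'(h ▸ hi) := by subst h; rfl

open Classical in
/-- The harvester's reverse transition function. -/
noncomputable def harvDelta {A Q : Type*} (M : NFA A Q) :
    (Q ⊕ Unit) → (A × Set Q) → (Q ⊕ Unit)
  | Sum.inr _, (a, S) =>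
      if h : ∃ q ∈ S, (M.step q a ∩ M.accept).Nonempty then Sum.inl h.choose
      else Sum.inr ()
  | Sum.inl q', (a, S) =>
      if h : ∃ q ∈ S, q' ∈ M.step q a then Sum.inl h.choose
      else Sum.inr ()

/-- Abstract version of the determinization–harvester lemma, with the
deterministic run `p` and the zipped word `u` as abstract lists. -/
theorem harvester_aux {A Q : Type*} (M : NFA A Q) (w : List A) (n : ℕ)
    (hn : w.length = n) (hn1 : 0 < n)
    (p : List (Set Q)) (hplen : p.length = n + 1)
    (hp0 : p[0]'(by omega) = M.start)
    (hpsucc : ∀ i, ∀ _ : i < n,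
      p[i + 1]'(by omega) = M.stepSet (p[i]'(by omega)) (w[i]'(by omega)))
    (qa : Q) (hqa_acc : qa ∈ M.accept) (hqa_mem : qa ∈ (p[n]'(by omega)))
    (u : List (A × Set Q)) (hulen : u.length = n)
    (huget : ∀ i, ∀ _ : i < n, u[i]'(by omega) = (w[i]'(by omega), p[i]'(by omega))) :
    ∃ r : List Q, IsAcceptingRun M w r ∧
      (List.scanl (harvDelta M) (Sum.inr ()) u.reverse).reverse.dropLast
        = (r.dropLast).map Sum.inl := by
  classical
  set f : ℕ → (Q ⊕ Unit) := fun j => List.foldl (harvDelta M) (Sum.inr ()) (u.reverse.take j)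
    with hf
  have hfsucc : ∀ j, ∀ _ : j < n,
      f (j + 1) = harvDelta M (f j) (w[n-1-j]'(by omega), p[n-1-j]'(by omega)) := by
    intro j hj
    have h1 : j < u.reverse.length := by simp [hulen, hj]
    rw [hf]
    simp only
    rw [← List.take_concat_get h1, List.concat_eq_append, List.foldl_append,
      List.getElem_reverse]
    have e0 : u.length - 1 - j < n := by omega
    rw [huget (u.length - 1 - j) e0, gidx w (show u.length - 1 - j = n - 1 - j by omega),
      gidx p (show u.length - 1 - j = n - 1 - j by omega)]
    rfl
  -- base: existence hypothesis at the accept end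
  have hqn : qa ∈ M.stepSet (p[n-1]'(by omega)) (w[n-1]'(by omega)) := by
    have h2 : p[n]'(by omega) = M.stepSet (p[n-1]'(by omega)) (w[n-1]'(by omega)) :=
      (gidx p (show n = n - 1 + 1 by omega)).trans (hpsucc (n-1) (by omega))
    exact h2 ▸ hqa_mem
  obtain ⟨q0, hq0mem, hq0step⟩ := M.mem_stepSet.mp hqn
  have h1 : ∃ q ∈ (p[n-1]'(by omega)), (M.step q (w[n-1]'(by omega)) ∩ M.accept).Nonempty :=
    ⟨q0, hq0mem, qa, hq0step, hqa_acc⟩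
  have hf1 : f 1 = Sum.inl h1.choose := by
    have h0 : f 0 = Sum.inr () := by simp [hf]
    have h2 := hfsucc 0 (by omega)
    rw [h0] at h2
    simp only [Nat.sub_zero] at h2
    rw [show f 1 = f (0+1) from rfl, h2]
    simp only [harvDelta]
    exact dif_pos h1
  -- invariant
  have Hinv : ∀ j, 1 ≤ j → j ≤ n → ∃ q, f j = Sum.inl q ∧ q ∈ (p[n-j]'(by omega)) := by
    intro j
    induction j with
    | zero => omega
    | succ j ih =>
      intro _ hjn
      rcases Nat.eq_zero_or_pos j with rfl | hj1
      · exact ⟨h1.choose, hf1, h1.choose_spec.1⟩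
      · obtain ⟨q, hfq, hqmem⟩ := ih hj1 (by omega)
        have hstep := hfsucc j (by omega)
        have hmem : q ∈ M.stepSet (p[n-1-j]'(by omega)) (w[n-1-j]'(by omega)) := by
          have h2 : p[n-j]'(by omega) = M.stepSet (p[n-1-j]'(by omega)) (w[n-1-j]'(by omega)) :=
            (gidx p (show n - j = n - 1 - j + 1 by omega)).trans (hpsucc (n-1-j) (by omega))
          exact h2 ▸ hqmem
        obtain ⟨q', hq'mem, hq'step⟩ := M.mem_stepSet.mp hmem
        have hex : ∃ s ∈ (p[n-1-j]'(by omega)), q ∈ M.step s (w[n-1-j]'(by omega)) :=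
          ⟨q', hq'mem, hq'step⟩
        refine ⟨hex.choose, ?_, ?_⟩
        · rw [hstep, hfq]
          simp only [harvDelta, dif_pos hex]
        · rw [gidx p (show n - (j + 1) = n - 1 - j by omega)]
          exact hex.choose_spec.1
  -- step links
  have Hstep : ∀ j, 1 ≤ j → j < n → ∀ qj qj1, f j = Sum.inl qj → f (j+1) = Sum.inl qj1 →
      qj ∈ M.step qj1 (w[n-1-j]'(by omega)) := by
    intro j hj1 hjn qj qj1 hfj hfj1
    have hstep := hfsucc j hjn
    rw [hfj] at hstep
    obtain ⟨q, hfq, hqmem⟩ := Hinv j hj1 (by omega)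
    have hq : q = qj := by rw [hfj] at hfq; exact (Sum.inl.inj hfq.symm)
    subst hq
    have hmem : q ∈ M.stepSet (p[n-1-j]'(by omega)) (w[n-1-j]'(by omega)) := by
      have h2 : p[n-j]'(by omega) = M.stepSet (p[n-1-j]'(by omega)) (w[n-1-j]'(by omega)) :=
        (gidx p (show n - j = n - 1 - j + 1 by omega)).trans (hpsucc (n-1-j) (by omega))
      exact h2 ▸ hqmem
    obtain ⟨q', hq'mem, hq'step⟩ := M.mem_stepSet.mp hmem
    have hex : ∃ s ∈ (p[n-1-j]'(by omega)), q ∈ M.step s (w[n-1-j]'(by omega)) :=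
      ⟨q', hq'mem, hq'step⟩
    rw [hstep] at hfj1
    simp only [harvDelta, dif_pos hex] at hfj1
    have h6 : hex.choose = qj1 := Sum.inl.inj hfj1
    rw [← h6]
    exact hex.choose_spec.2
  -- extraction function
  set qfin : Q := h1.choose_spec.2.choose with hqfin
  have hqfin_spec : qfin ∈ M.step h1.choose (w[n-1]'(by omega)) ∩ M.accept :=
    h1.choose_spec.2.choose_spec
  set g : ℕ → Q := fun j => Sum.elim id (fun _ => qfin) (f j) with hg
  have hgf : ∀ j, 1 ≤ j → j ≤ n → f j = Sum.inl (g j) := by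
    intro j hj1 hjn
    obtain ⟨q, hq, _⟩ := Hinv j hj1 hjn
    rw [hg]; simp only [hq, Sum.elim_inl, id]
  have hgmem : ∀ j, ∀ _ : 1 ≤ j, ∀ _ : j ≤ n, g j ∈ (p[n-j]'(by omega)) := by
    intro j hj1 hjn
    obtain ⟨q, hq, hmem⟩ := Hinv j hj1 hjn
    have hqg : q = g j := Sum.inl.inj (hq.symm.trans (hgf j hj1 hjn))
    rwa [hqg] at hmem
  have hg1 : g 1 = h1.choose := Sum.inl.inj ((hgf 1 le_rfl (by omega)).symm.trans hf1)
  -- the run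
  set r : List Q := (List.ofFn fun i : Fin n => g (n - i)) ++ [qfin] with hr
  have hrlen : r.length = n + 1 := by simp [hr]
  have hrget : ∀ i, ∀ _ : i < n, r[i]'(by omega) = g (n - i) := by
    intro i hi
    simp only [hr]
    rw [List.getElem_append_left (by simp [hi]), List.getElem_ofFn]
  have hrn : r[n]'(by omega) = qfin := by
    simp only [hr]
    rw [List.getElem_append_right (by simp)]
    simp
  refine ⟨r, ⟨by rw [hrlen, hn], ?_, ?_, ?_⟩, ?_⟩
  · -- start
    rw [hrget 0 hn1]
    have h7 := hgmem n hn1 le_rfl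
    simp only [Nat.sub_self] at h7 ⊢
    rwa [hp0] at h7
  · -- steps
    intro i hi
    rw [hn] at hi
    rcases Nat.lt_or_ge i (n - 1) with hilt | hige
    · have e1 : i + 1 < n := by omega
      rw [hrget (i+1) e1, hrget i (by omega)]
      have hj1 : (1:ℕ) ≤ n - 1 - i := by omega
      have hjn : n - 1 - i < n := by omega
      have h2 := Hstep (n-1-i) hj1 hjn (g (n-1-i)) (g (n-1-i+1))
        (hgf _ hj1 (by omega)) (hgf _ (by omega) (by omega))
      have e3 : n - (i+1) = n - 1 - i := by omega
      have e4 : n - i = n - 1 - i + 1 := by omega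
      rw [e3, e4, gidx w (show i = n - 1 - (n - 1 - i) by omega)]
      exact h2
    · have hieq : i = n - 1 := by omega
      subst hieq
      have h6 : r[n-1+1]'(by omega) = qfin :=
        (gidx r (show n - 1 + 1 = n by omega)).trans hrn
      rw [h6, hrget (n-1) (by omega)]
      have e6 : n - (n - 1) = 1 := by omega
      rw [e6, hg1]
      exact hqfin_spec.1
  · -- accept
    have h8 : r[w.length]'(by omega) = qfin := (gidx r hn).trans hrn
    rw [h8]
    exact hqfin_spec.2
  · -- the harvester run agrees
    have hblen : (List.scanl (harvDelta M) (Sum.inr ()) u.reverse).length = n + 1 := by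
      simp [List.length_scanl, hulen]
    have hbget : ∀ j, ∀ _ : j ≤ n,
        (List.scanl (harvDelta M) (Sum.inr ()) u.reverse)[j]'(by omega) = f j := by
      intro j hj
      rw [scanl_getElem' _ _ _ j (by omega)]
    apply List.ext_getElem
    · simp [hblen, hrlen, hulen]
    · intro i h1' h2'
      have hin : i < n := by
        simp only [List.length_dropLast, List.length_reverse, hblen] at h1'
        omega
      rw [List.getElem_dropLast, List.getElem_map, List.getElem_dropLast,
        List.getElem_reverse]
      have e8 : ∀ hh, (List.scanl (harvDelta M) (Sum.inr ())
          u.reverse)[(List.scanl (harvDelta M) (Sum.inr ()) u.reverse).length - 1 - i]'hh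
          = f (n - i) := by
        intro hh
        exact (gidx _ (show (List.scanl (harvDelta M) (Sum.inr ()) u.reverse).length - 1 - i
          = n - i by rw [hblen]; omega)).trans (hbget (n-i) (by omega))
      rw [e8, hrget i hin, hgf (n-i) (by omega) (by omega)]

/-- Determinization–harvester lemma: the harvester, run backwards on
the input zipped with the run of the powerset determinization, produces an
accepting run of the original NFA. -/
theorem determinization_harvester {A Q : Type*} [Fintype A] [Fintype Q]
    (M : NFA A Q) :
    ∃ δ' : (Q ⊕ Unit) → (A × Set Q) → (Q ⊕ Unit),
      ∀ w : List A, w ∈ M.accepts →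
        ∃ r : List Q, IsAcceptingRun M w r ∧
          (let p : List (Set Q) := List.scanl M.stepSet M.start w
           let u : List (A × Set Q) := w.zip p.dropLast
           let r' : List (Q ⊕ Unit) := (List.scanl δ' (Sum.inr ()) u.reverse).reverse
           r'.dropLast = (r.dropLast).map Sum.inl) := by
  classical
  refine ⟨harvDelta M, ?_⟩
  intro w hw
  obtain ⟨qa, hqa_acc, hqa_mem⟩ : ∃ q ∈ M.accept, q ∈ List.foldl M.stepSet M.start w := hw
  rcases Nat.eq_zero_or_pos w.length with hn0 | hn1
  · -- empty word
    have hwnil : w = [] := List.length_eq_zero_iff.mp hn0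
    subst hwnil
    refine ⟨[qa], ⟨by simp, ?_, by intro i hi; simp at hi, by simpa⟩, by simp⟩
    simpa using hqa_mem
  · have hplen : (List.scanl M.stepSet M.start w).length = w.length + 1 := by
      simp [List.length_scanl]
    obtain ⟨r, hrun, heq⟩ := harvester_aux M w w.length rfl hn1
      (List.scanl M.stepSet M.start w) hplen
      (by rw [scanl_getElem']; simp)
      (by
        intro i hi
        rw [scanl_getElem' _ _ _ (i+1) (by omega), scanl_getElem' _ _ _ i (by omega),
          ← List.take_concat_get (show i < w.length by omega), List.concat_eq_append, List.foldl_append]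
        simp)
      qa hqa_acc
      (by rw [scanl_getElem' _ _ _ w.length (by omega)]; simpa using hqa_mem)
      (w.zip (List.scanl M.stepSet M.start w).dropLast)
      (by simp [hplen])
      (by
        intro i hi
        rw [List.getElem_zip, List.getElem_dropLast])
    exact ⟨r, hrun, heq⟩
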